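/- Let V be an n-by-n Vandermonde matrix generated by distinct real (or complex) numbers alpha_1,...,alpha_n. Then the l-infinity to l-infinity operator norm of V^{-1} is at most max over i of the product over j != i of (1 + |alpha_j|)/|alpha_j - alpha_i|. -/

import Mathlib

/-- The `ℓ∞ → ℓ∞` operator norm of a complex matrix: the maximum absolute row sum. -/
noncomputable def infNormC {n : ℕ} (A : Matrix (Fin n) (Fin n) ℂ) : ℝ :=
  sSup {r : ℝ | ∃ i : Fin n, r = ∑ j, ‖A i j‖}

open Polynomial Finset

private lemma coeffSum_X_sub_C_mul (a : ℂ) (p : ℂ[X]) (N : ℕ) :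
    ∑ j ∈ Finset.range N, ‖((X - C a) * p).coeff j‖
      ≤ (1 + ‖a‖) * ∑ j ∈ Finset.range N, ‖p.coeff j‖ := by
  have hXp : ∑ j ∈ Finset.range N, ‖(X * p).coeff j‖
      ≤ ∑ j ∈ Finset.range N, ‖p.coeff j‖ := by
    cases N with
    | zero => simp
    | succ m =>
      rw [Finset.sum_range_succ']
      simp only [Polynomial.coeff_X_mul]
      have h0 : (X * p).coeff 0 = 0 := by
        rw [Polynomial.mul_coeff_zero, Polynomial.coeff_X_zero, zero_mul]
      rw [h0, norm_zero, add_zero]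
      exact Finset.sum_le_sum_of_subset_of_nonneg
        (Finset.range_subset_range.2 (Nat.le_succ m)) (by intros; positivity)
  have h1 : ∑ j ∈ Finset.range N, ‖((X - C a) * p).coeff j‖
      ≤ ∑ j ∈ Finset.range N, (‖(X * p).coeff j‖
          + ‖a‖ * ‖p.coeff j‖) := by
    refine Finset.sum_le_sum fun j _ => ?_
    have h : ((X - C a) * p).coeff j = (X * p).coeff j - a * p.coeff j := by
      rw [sub_mul, Polynomial.coeff_sub, Polynomial.coeff_C_mul]
    rw [h, ← norm_mul]
    exact norm_sub_le _ _
  have h2 : ∑ j ∈ Finset.range N, (‖(X * p).coeff j‖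
          + ‖a‖ * ‖p.coeff j‖)
      = (∑ j ∈ Finset.range N, ‖(X * p).coeff j‖)
          + ‖a‖ * ∑ j ∈ Finset.range N, ‖p.coeff j‖ := by
    rw [Finset.sum_add_distrib, Finset.mul_sum]
  refine le_trans h1 (le_trans (le_of_eq h2) ?_)
  have h3 : (∑ j ∈ Finset.range N, ‖(X * p).coeff j‖)
          + ‖a‖ * ∑ j ∈ Finset.range N, ‖p.coeff j‖
      ≤ (∑ j ∈ Finset.range N, ‖p.coeff j‖)
          + ‖a‖ * ∑ j ∈ Finset.range N, ‖p.coeff j‖ :=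
    add_le_add_left hXp _
  refine le_trans h3 (le_of_eq ?_)
  ring

private lemma coeffSum_prod_X_sub_C {ι : Type*} [DecidableEq ι] (t : Finset ι) (β : ι → ℂ)
    (N : ℕ) :
    ∑ j ∈ Finset.range N, ‖(∏ k ∈ t, (X - C (β k))).coeff j‖
      ≤ ∏ k ∈ t, (1 + ‖β k‖) := by
  induction t using Finset.induction_on with
  | empty =>
    simp only [Finset.prod_empty]
    cases N with
    | zero => simp
    | succ m =>
      have h : ∀ j ∈ Finset.range (m+1), ‖(1 : ℂ[X]).coeff j‖
          = if j = 0 then 1 else 0 := by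
        intro j _
        rcases eq_or_ne j 0 with rfl | hj
        · simp
        · simp [Polynomial.coeff_one, hj]
      rw [Finset.sum_congr rfl h,
        Finset.sum_ite_eq' (Finset.range (m+1)) 0 (fun _ => (1:ℝ))]
      simp
  | @insert k t' hk ih =>
    rw [Finset.prod_insert hk, Finset.prod_insert hk]
    have h1 : ∑ j ∈ Finset.range N,
          ‖((X - C (β k)) * ∏ x ∈ t', (X - C (β x))).coeff j‖
        ≤ (1 + ‖β k‖) * ∑ j ∈ Finset.range N,
            ‖(∏ x ∈ t', (X - C (β x))).coeff j‖ :=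
      coeffSum_X_sub_C_mul _ _ _
    refine le_trans h1 ?_
    have hpos : (0:ℝ) ≤ 1 + ‖β k‖ := by positivity
    exact mul_le_mul_of_nonneg_left ih hpos

set_option maxHeartbeats 1000000 in
/-- Gautschi, upper bound: For the `n × n` Vandermonde matrix `V`
generated by distinct (complex) numbers `α_1, …, α_n`, the `ℓ∞ → ℓ∞` operator norm of
`V⁻¹` is at most `max_i ∏_{j ≠ i} (1 + |α_j|)/|α_j - α_i|`. -/
theorem vandermonde_inverse_infNorm_le {n : ℕ} (hn : 0 < n)
    (α : Fin n → ℂ) (hinj : Function.Injective α)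
    (V : Matrix (Fin n) (Fin n) ℂ) (hV : ∀ i j, V i j = α j ^ (i : ℕ)) :
    infNormC V⁻¹ ≤
      sSup {r : ℝ | ∃ i : Fin n,
        r = ∏ j ∈ Finset.univ.erase i, (1 + ‖α j‖) / ‖α j - α i‖} := by
  classical
  have hInjOn : Set.InjOn α (Finset.univ : Finset (Fin n)) := fun a _ b _ h => hinj h
  obtain ⟨W, hWdef⟩ : ∃ W : Matrix (Fin n) (Fin n) ℂ,
      ∀ i j, W i j = (Lagrange.basis Finset.univ α i).coeff (j : ℕ) :=
    ⟨fun i j => (Lagrange.basis Finset.univ α i).coeff (j : ℕ), fun _ _ => rfl⟩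
  obtain ⟨f, hfdef⟩ : ∃ f : Fin n → ℝ,
      ∀ i, f i = ∏ j ∈ Finset.univ.erase i,
        (1 + ‖α j‖) / ‖α j - α i‖ :=
    ⟨_, fun _ => rfl⟩
  -- W is a left inverse of V
  have hWV : W * V = 1 := by
    ext i k
    have hdeg : (Lagrange.basis Finset.univ α i).natDegree < n := by
      rw [Lagrange.natDegree_basis hInjOn (Finset.mem_univ i), Finset.card_univ,
        Fintype.card_fin]
      omega
    have heval : (W * V) i k = (Lagrange.basis Finset.univ α i).eval (α k) := by
      rw [Matrix.mul_apply, Polynomial.eval_eq_sum_range' hdeg,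
        ← Fin.sum_univ_eq_sum_range
          (fun j => (Lagrange.basis Finset.univ α i).coeff j * α k ^ j) n]
      refine Finset.sum_congr rfl fun j _ => ?_
      rw [hV j k, hWdef i j]
    rw [heval]
    rcases eq_or_ne i k with rfl | hik
    · rw [Lagrange.eval_basis_self hInjOn (Finset.mem_univ i), Matrix.one_apply_eq]
    · rw [Lagrange.eval_basis_of_ne hik (Finset.mem_univ k), Matrix.one_apply_ne hik]
  have hVinv : V⁻¹ = W := Matrix.inv_eq_left_inv hWV
  have hSet : {r : ℝ | ∃ i : Fin n, r = ∏ j ∈ Finset.univ.erase i,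
      (1 + ‖α j‖) / ‖α j - α i‖} = Set.range f := by
    ext r; constructor
    · rintro ⟨i, hi⟩; exact ⟨i, by rw [hfdef i, hi]⟩
    · rintro ⟨i, hi⟩; exact ⟨i, by rw [← hi, hfdef i]⟩
  have hbdd : BddAbove (Set.range f) := (Set.finite_range f).bddAbove
  -- row sums bounded by f i
  have hrow : ∀ i : Fin n, ∑ j, ‖W i j‖ ≤ f i := by
    intro i
    have hfac : Lagrange.basis Finset.univ α i
        = C (∏ j ∈ Finset.univ.erase i, (α i - α j)⁻¹)
          * ∏ j ∈ Finset.univ.erase i, (X - C (α j)) := by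
      rw [Lagrange.basis]
      simp_rw [Lagrange.basisDivisor]
      rw [Finset.prod_mul_distrib, ← map_prod]
    have hco : ∀ j : ℕ, ‖(Lagrange.basis Finset.univ α i).coeff j‖
        = ‖∏ j ∈ Finset.univ.erase i, (α i - α j)⁻¹‖
          * ‖(∏ j ∈ Finset.univ.erase i, (X - C (α j))).coeff j‖ := by
      intro j
      rw [hfac, Polynomial.coeff_C_mul, norm_mul]
    have hsum : ∑ j, ‖W i j‖
        = ‖∏ j ∈ Finset.univ.erase i, (α i - α j)⁻¹‖
          * ∑ j ∈ Finset.range n,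
              ‖(∏ j ∈ Finset.univ.erase i, (X - C (α j))).coeff j‖ := by
      rw [Finset.mul_sum]
      have h0 : (∑ j, ‖W i j‖)
          = ∑ j : Fin n, ‖(Lagrange.basis Finset.univ α i).coeff (j : ℕ)‖ :=
        Finset.sum_congr rfl fun j _ => by rw [hWdef i j]
      rw [h0, Fin.sum_univ_eq_sum_range
        (fun j => ‖(Lagrange.basis Finset.univ α i).coeff j‖) n]
      exact Finset.sum_congr rfl fun j _ => hco j
    rw [hsum]
    have habs : ‖∏ j ∈ Finset.univ.erase i, (α i - α j)⁻¹‖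
        = ∏ j ∈ Finset.univ.erase i, (‖α j - α i‖)⁻¹ := by
      rw [norm_prod]
      refine Finset.prod_congr rfl fun j _ => ?_
      rw [norm_inv, norm_sub_rev]
    have hprodpos : (0:ℝ) ≤ ∏ j ∈ Finset.univ.erase i, (‖α j - α i‖)⁻¹ :=
      Finset.prod_nonneg fun j _ => inv_nonneg.2 (norm_nonneg _)
    have hstep : ‖∏ j ∈ Finset.univ.erase i, (α i - α j)⁻¹‖
          * ∑ j ∈ Finset.range n,
              ‖(∏ j ∈ Finset.univ.erase i, (X - C (α j))).coeff j‖
        ≤ (∏ j ∈ Finset.univ.erase i, (‖α j - α i‖)⁻¹)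
          * ∏ j ∈ Finset.univ.erase i, (1 + ‖α j‖) := by
      rw [habs]
      exact mul_le_mul_of_nonneg_left (coeffSum_prod_X_sub_C _ _ _) hprodpos
    refine le_trans hstep (le_of_eq ?_)
    rw [hfdef i, ← Finset.prod_mul_distrib]
    refine Finset.prod_congr rfl fun j _ => ?_
    rw [div_eq_mul_inv, mul_comm]
  -- conclude
  rw [infNormC, hVinv, hSet]
  refine Real.sSup_le ?_ ?_
  · rintro x ⟨i, rfl⟩
    exact le_trans (hrow i) (le_csSup hbdd ⟨i, rfl⟩)
  · obtain ⟨i⟩ := Fin.pos_iff_nonempty.mp hn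
    refine le_trans ?_ (le_csSup hbdd ⟨i, rfl⟩)
    rw [hfdef i]
    exact Finset.prod_nonneg fun j _ =>
      div_nonneg (add_nonneg zero_le_one (norm_nonneg _)) (norm_nonneg _)
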